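/- For p ∈ (1,∞) let d_p := π_p/(π_p^p + 1)^{1/p}, where π_p := 2π(p−1)^{1/p}/(p·sin(π/p)). Then 2/3 < d_p < 1, and moreover d^{2−p} ≥ 2/3 for every d ∈ [d_p, 1]. -/

import Mathlib

open Filter Topology

/-- `π_p := 2π (p-1)^{1/p} / (p sin(π/p))`. -/
noncomputable def piP (p : ℝ) : ℝ :=
  2 * Real.pi * (p - 1) ^ (1 / p) / (p * Real.sin (Real.pi / p))

/-- `d_p := π_p / (π_p^p + 1)^{1/p}`, characterized by `(π_p/d_p)^p = π_p^p + 1`. -/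
noncomputable def dP (p : ℝ) : ℝ := piP p / (piP p ^ p + 1) ^ (1 / p)

lemma piP_ge_two (p : ℝ) (hp : 1 < p) : 2 ≤ piP p := by
  have hp0 : (0:ℝ) < p := lt_trans one_pos hp
  have hp1 : (0:ℝ) < p - 1 := by linarith
  have hπ := Real.pi_pos
  have hπp0 : 0 < Real.pi / p := div_pos hπ hp0
  have hπpπ : Real.pi / p < Real.pi := div_lt_self hπ hp
  have hs : 0 < Real.sin (Real.pi / p) := Real.sin_pos_of_pos_of_lt_pi hπp0 hπpπ
  have hB : 0 < p * Real.sin (Real.pi / p) := mul_pos hp0 hs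
  have hrpow : 0 < (p - 1) ^ (1 / p) := Real.rpow_pos_of_pos hp1 _
  have hA : 0 ≤ 2 * Real.pi * (p - 1) ^ (1 / p) := by positivity
  rcases le_or_gt 2 p with h2 | h2
  · -- p ≥ 2 : use sin(π/p) ≤ π/p
    have hle : p * Real.sin (Real.pi / p) ≤ Real.pi := by
      have := Real.sin_le hπp0.le
      calc p * Real.sin (Real.pi / p) ≤ p * (Real.pi / p) :=
            mul_le_mul_of_nonneg_left this hp0.le
        _ = Real.pi := by field_simp
    have h1 : (1:ℝ) ≤ (p - 1) ^ (1 / p) := by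
      have : (p-1) ^ (0:ℝ) ≤ (p-1) ^ (1/p) :=
        Real.rpow_le_rpow_of_exponent_le (by linarith) (by positivity)
      simpa using this
    have : 2 * Real.pi * 1 / Real.pi ≤ piP p := by
      unfold piP
      apply div_le_div₀ (by positivity)
      · nlinarith
      · exact hB
      · exact hle
    calc (2:ℝ) = 2 * Real.pi * 1 / Real.pi := by field_simp
      _ ≤ piP p := this
  · -- p < 2 : use sin(π/p) = sin(π(p-1)/p) ≤ π(p-1)/p
    have hsin : Real.sin (Real.pi / p) = Real.sin (Real.pi * (p-1) / p) := by
      have : Real.pi * (p-1) / p = Real.pi - Real.pi / p := by field_simp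
      rw [this, Real.sin_pi_sub]
    have hle : p * Real.sin (Real.pi / p) ≤ Real.pi * (p - 1) := by
      rw [hsin]
      have h0 : 0 ≤ Real.pi * (p-1) / p := by positivity
      calc p * Real.sin (Real.pi * (p-1) / p) ≤ p * (Real.pi * (p-1) / p) :=
            mul_le_mul_of_nonneg_left (Real.sin_le h0) hp0.le
        _ = Real.pi * (p - 1) := by field_simp
    have h1 : (1:ℝ) ≤ (p - 1) ^ (1 / p - 1) :=
      Real.one_le_rpow_of_pos_of_le_one_of_nonpos hp1 (by linarith)
        (by
          have : 1 / p < 1 := by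
            rw [div_lt_one hp0]; linarith
          linarith)
    have key : 2 * Real.pi * (p - 1) ^ (1 / p) / (Real.pi * (p - 1)) ≤ piP p := by
      unfold piP
      apply div_le_div_of_nonneg_left hA hB hle
    have heq : 2 * Real.pi * (p - 1) ^ (1 / p) / (Real.pi * (p - 1))
        = 2 * (p - 1) ^ (1 / p - 1) := by
      rw [Real.rpow_sub hp1, Real.rpow_one]
      field_simp
    rw [heq] at key
    nlinarith

/-- Remark 4.3: `2/3 < d_p < 1`, and `d^{2-p} ≥ 2/3` for every
`d ∈ [d_p, 1]`. -/
theorem stmt18 (p : ℝ) (hp : 1 < p) :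
    2 / 3 < dP p ∧ dP p < 1 ∧ ∀ d ∈ Set.Icc (dP p) 1, d ^ (2 - p) ≥ 2 / 3 := by
  have hp0 : (0:ℝ) < p := lt_trans one_pos hp
  have hπ2 : (2:ℝ) ≤ piP p := piP_ge_two p hp
  have hπ0 : (0:ℝ) < piP p := by linarith
  set x : ℝ := piP p ^ p with hx
  have hx2 : (2:ℝ) ≤ x := by
    calc (2:ℝ) = 2 ^ (1:ℝ) := by norm_num
      _ ≤ 2 ^ p := Real.rpow_le_rpow_of_exponent_le (by norm_num) hp.le
      _ ≤ piP p ^ p := Real.rpow_le_rpow (by norm_num) hπ2 hp0.le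
  have hx0 : (0:ℝ) < x := by linarith
  have hx10 : (0:ℝ) < x + 1 := by linarith
  have hd0 : 0 < dP p := by
    unfold dP
    exact div_pos hπ0 (Real.rpow_pos_of_pos hx10 _)
  -- d_p ^ p = x / (x+1)
  have hdp : dP p ^ p = x / (x + 1) := by
    unfold dP
    rw [Real.div_rpow hπ0.le (Real.rpow_pos_of_pos hx10 _).le, one_div,
      Real.rpow_inv_rpow hx10.le (ne_of_gt hp0)]
  have hd1 : dP p < 1 := by
    unfold dP
    rw [div_lt_one (Real.rpow_pos_of_pos hx10 _)]
    calc piP p = (piP p ^ p) ^ (1/p) := by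
          rw [one_div, Real.rpow_rpow_inv hπ0.le (ne_of_gt hp0)]
      _ < (x + 1) ^ (1/p) := by
          apply Real.rpow_lt_rpow (by positivity) (by rw [← hx]; linarith) (by positivity)
  have hd23 : 2/3 < dP p := by
    by_contra h
    push_neg at h
    have h1 : dP p ^ p ≤ (2/3 : ℝ) ^ p := Real.rpow_le_rpow hd0.le h hp0.le
    have h2 : (2/3 : ℝ) ^ p < (2/3:ℝ) ^ (1:ℝ) :=
      Real.rpow_lt_rpow_of_exponent_gt (by norm_num) (by norm_num) hp
    have h3 : (2/3:ℝ) ≤ x / (x+1) := by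
      rw [le_div_iff₀ hx10]; nlinarith
    rw [hdp] at h1
    rw [Real.rpow_one] at h2
    linarith
  refine ⟨hd23, hd1, ?_⟩
  rintro d ⟨hdl, hdu⟩
  have hdpos : 0 < d := lt_of_lt_of_le (by linarith) hdl
  rcases le_or_gt p 2 with h2 | h2
  · have : d ^ (2 - p) ≥ d ^ (1:ℝ) := by
      apply Real.rpow_le_rpow_of_exponent_ge hdpos hdu
      linarith
    rw [Real.rpow_one] at this
    linarith
  · have : (1:ℝ) ≤ d ^ (2 - p) :=
      Real.one_le_rpow_of_pos_of_le_one_of_nonpos hdpos hdu (by linarith)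
    linarith
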